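/- Consider the factor model Σ = B B' + Σ_ε with identifiability normalization var(f) = I_m, where the rows b_i' of the p × m loading matrix B are an i.i.d. sample from a population with mean zero and covariance Σ_b, and suppose the spectral norm ‖Σ_ε‖ is bounded. Then almost surely as p → ∞, the j-th largest eigenvalue of Σ satisfies λ_j(Σ) = p λ_j(Σ_b)(1 + o(1)) for j = 1,…,m, while the remaining eigenvalues λ_j(Σ) for j > m stay bounded. -/

import Mathlib

open MeasureTheory ProbabilityTheory Filter Matrix

noncomputable section

/-- The `j`-th largest element (0-indexed) of a finite family of reals. -/
def nthLargest {d : ℕ} (f : Fin d → ℝ) (j : Fin d) : ℝ :=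
  ((Multiset.map f Finset.univ.val).sort (· ≤ ·)).getD (d - 1 - (j : ℕ)) 0

open Classical in
/-- The `j`-th largest eigenvalue of a real matrix (junk value `0` if not symmetric). -/
def eigDesc {d : ℕ} (M : Matrix (Fin d) (Fin d) ℝ) (j : Fin d) : ℝ :=
  if h : M.IsHermitian then nthLargest h.eigenvalues j else 0

open Classical

lemma sort_length {d : ℕ} (f : Fin d → ℝ) :
    ((Multiset.map f Finset.univ.val).sort (· ≤ ·)).length = d := by
  simp [Multiset.length_sort]

lemma nth_idx {d : ℕ} (j : Fin d) : d - 1 - (j : ℕ) < d := by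
  have := j.2; omega

lemma card_ge_nthLargest {d : ℕ} (f : Fin d → ℝ) (j : Fin d) :
    (j : ℕ) + 1 ≤ (Finset.univ.filter fun i => nthLargest f j ≤ f i).card := by
  classical
  set l := ((Multiset.map f Finset.univ.val).sort (· ≤ ·)) with hl
  have hlen : l.length = d := sort_length f
  have hsort : l.Pairwise (· ≤ ·) := Multiset.pairwise_sort _ _
  set k := d - 1 - (j : ℕ) with hk
  have hkd : k < l.length := by rw [hlen]; exact nth_idx j
  have hval : nthLargest f j = l.get ⟨k, hkd⟩ := by
    rw [nthLargest, ← hl, List.getD_eq_getElem _ _ hkd]; rfl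
  -- count in the list
  have hcount : (l.drop k).length ≤ l.countP (fun x => decide (nthLargest f j ≤ x)) := by
    have : ∀ x ∈ l.drop k, nthLargest f j ≤ x := by
      intro x hx
      obtain ⟨i, hi, rfl⟩ := List.mem_iff_getElem.1 hx
      rw [List.getElem_drop]
      rw [hval]
      have : k ≤ k + i := Nat.le_add_right _ _
      simpa using hsort.rel_get_of_le (a := ⟨k, hkd⟩)
        (b := ⟨k + i, by have := hi; simp at this ⊢; omega⟩) (by simpa using this)
    calc (l.drop k).length = (l.drop k).countP (fun x => decide (nthLargest f j ≤ x)) := by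
          refine (List.countP_eq_length.2 ?_).symm
          intro a ha; simpa using this a ha
      _ ≤ l.countP _ := by
          conv_rhs => rw [← List.take_append_drop k l]
          rw [List.countP_append]; omega
  have hdrop : (l.drop k).length = d - k := by simp [hlen]
  have hcard : (Finset.univ.filter fun i => nthLargest f j ≤ f i).card
      = l.countP (fun x => decide (nthLargest f j ≤ x)) := by
    have h1 : (Finset.univ.filter fun i => nthLargest f j ≤ f i).card
        = Multiset.countP (fun x => nthLargest f j ≤ x) (Multiset.map f Finset.univ.val) := by
      rw [Multiset.countP_map, Finset.card_def, Finset.filter_val]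
    have h2 : (Multiset.map f Finset.univ.val) = (l : Multiset ℝ) := by
      rw [hl, Multiset.sort_eq]
    rw [h1, h2]
    simp [Multiset.coe_countP, List.countP]
  rw [hcard]
  have := j.2
  omega

end

noncomputable section
lemma card_le_nthLargest {d : ℕ} (f : Fin d → ℝ) (j : Fin d) :
    d - (j : ℕ) ≤ (Finset.univ.filter fun i => f i ≤ nthLargest f j).card := by
  classical
  set l := ((Multiset.map f Finset.univ.val).sort (· ≤ ·)) with hl
  have hlen : l.length = d := sort_length f
  have hsort : l.Pairwise (· ≤ ·) := Multiset.pairwise_sort _ _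
  set k := d - 1 - (j : ℕ) with hk
  have hkd : k < l.length := by rw [hlen]; exact nth_idx j
  have hval : nthLargest f j = l.get ⟨k, hkd⟩ := by
    rw [nthLargest, ← hl, List.getD_eq_getElem _ _ hkd]; rfl
  have hcount : (l.take (k+1)).length ≤ l.countP (fun x => decide (x ≤ nthLargest f j)) := by
    have hmem : ∀ x ∈ l.take (k+1), x ≤ nthLargest f j := by
      intro x hx
      obtain ⟨i, hi, rfl⟩ := List.mem_iff_getElem.1 hx
      rw [List.getElem_take]
      rw [hval]
      have hilen : i < l.length := by simp at hi; omega
      have hik : i ≤ k := by simp at hi; omega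
      simpa using hsort.rel_get_of_le (a := ⟨i, hilen⟩) (b := ⟨k, hkd⟩) (by simpa using hik)
    calc (l.take (k+1)).length = (l.take (k+1)).countP (fun x => decide (x ≤ nthLargest f j)) := by
          refine (List.countP_eq_length.2 ?_).symm
          intro a ha; simpa using hmem a ha
      _ ≤ l.countP _ := by
          conv_rhs => rw [← List.take_append_drop (k+1) l]
          rw [List.countP_append]; omega
  have htake : (l.take (k+1)).length = k + 1 := by
    simp [hlen]; omega
  have hcard : (Finset.univ.filter fun i => f i ≤ nthLargest f j).card
      = l.countP (fun x => decide (x ≤ nthLargest f j)) := by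
    have h1 : (Finset.univ.filter fun i => f i ≤ nthLargest f j).card
        = Multiset.countP (fun x => x ≤ nthLargest f j) (Multiset.map f Finset.univ.val) := by
      rw [Multiset.countP_map, Finset.card_def, Finset.filter_val]
    have h2 : (Multiset.map f Finset.univ.val) = (l : Multiset ℝ) := by
      rw [hl, Multiset.sort_eq]
    rw [h1, h2]
    simp [Multiset.coe_countP, List.countP]
  rw [hcard]
  have := j.2
  omega
end
open Matrix
noncomputable section

lemma eig_basis {n : ℕ} (A : Matrix (Fin n) (Fin n) ℝ) (hA : A.IsHermitian) :
    ∃ u : Fin n → (Fin n → ℝ),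
      (∀ i, A *ᵥ u i = hA.eigenvalues i • u i) ∧
      (∀ i k, u i ⬝ᵥ u k = if i = k then 1 else 0) ∧
      (∀ x : Fin n → ℝ, x = ∑ i, (u i ⬝ᵥ x) • u i) := by
  classical
  refine ⟨fun i => (hA.eigenvectorBasis i : EuclideanSpace ℝ (Fin n)), ?_, ?_, ?_⟩
  · exact fun i => hA.mulVec_eigenvectorBasis i
  · intro i k
    have := orthonormal_iff_ite.1 hA.eigenvectorBasis.orthonormal i k
    rw [← this]
    simp [PiLp.inner_apply, dotProduct, RCLike.inner_apply, mul_comm]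
  · intro x
    have h2 : ∀ i, ((hA.eigenvectorBasis i : EuclideanSpace ℝ (Fin n)) : Fin n → ℝ) ⬝ᵥ x
        = inner ℝ (hA.eigenvectorBasis i) (WithLp.toLp 2 x : EuclideanSpace ℝ (Fin n)) := by
      intro i; simp [PiLp.inner_apply, dotProduct, RCLike.inner_apply, mul_comm]
    simp_rw [h2]
    have h3 := congrArg WithLp.ofLp (hA.eigenvectorBasis.sum_repr' (WithLp.toLp 2 x : EuclideanSpace ℝ (Fin n)))
    rw [WithLp.ofLp_sum] at h3
    simpa using h3.symm

end

noncomputable section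

section helpers
variable {n : ℕ}

lemma dot_self_nonneg (x : Fin n → ℝ) : 0 ≤ x ⬝ᵥ x :=
  Finset.sum_nonneg fun i _ => mul_self_nonneg _

lemma dot_self_pos {x : Fin n → ℝ} (hx : x ≠ 0) : 0 < x ⬝ᵥ x :=
  lt_of_le_of_ne (dot_self_nonneg x) fun h => hx (dotProduct_self_eq_zero.1 h.symm)

lemma dotProduct_sum' {ι : Type*} (s : Finset ι) (v : Fin n → ℝ) (f : ι → Fin n → ℝ) :
    v ⬝ᵥ (∑ i ∈ s, f i) = ∑ i ∈ s, v ⬝ᵥ f i := by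
  simp only [dotProduct, Finset.sum_apply, Finset.mul_sum]
  exact Finset.sum_comm

lemma sum_dotProduct' {ι : Type*} (s : Finset ι) (v : Fin n → ℝ) (f : ι → Fin n → ℝ) :
    (∑ i ∈ s, f i) ⬝ᵥ v = ∑ i ∈ s, f i ⬝ᵥ v := by
  simp only [dotProduct, Finset.sum_apply, Finset.sum_mul]
  exact Finset.sum_comm

lemma mulVec_sum' {ι : Type*} (s : Finset ι) (A : Matrix (Fin n) (Fin n) ℝ)
    (f : ι → Fin n → ℝ) : A *ᵥ (∑ i ∈ s, f i) = ∑ i ∈ s, A *ᵥ f i := by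
  have h := map_sum (Matrix.mulVecLin A) f s
  simp only [Matrix.mulVecLin_apply] at h
  exact h

lemma dot_sum_sum (u : Fin n → Fin n → ℝ)
    (hu : ∀ i k, u i ⬝ᵥ u k = if i = k then (1:ℝ) else 0) (c e : Fin n → ℝ) :
    (∑ i, c i • u i) ⬝ᵥ (∑ i, e i • u i) = ∑ i, c i * e i := by
  rw [sum_dotProduct']
  refine Finset.sum_congr rfl fun i _ => ?_
  rw [dotProduct_sum']
  simp_rw [smul_dotProduct, dotProduct_smul, hu]
  rw [Finset.sum_eq_single i]
  · simp
  · intro k _ hk; simp [Ne.symm hk]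
  · simp

lemma exists_ne_zero_mem_inf (U W : Submodule ℝ (Fin n → ℝ))
    (h : n < Module.finrank ℝ U + Module.finrank ℝ W) :
    ∃ x, x ∈ U ⊓ W ∧ x ≠ 0 := by
  have hsup : Module.finrank ℝ ↥(U ⊔ W) ≤ n := by
    have := Submodule.finrank_le (U ⊔ W)
    simpa [Module.finrank_pi] using this
  have hinf : 0 < Module.finrank ℝ ↥(U ⊓ W) := by
    have := Submodule.finrank_sup_add_finrank_inf_eq U W
    omega
  have hne : U ⊓ W ≠ ⊥ := by
    intro h0
    rw [h0] at hinf
    simp at hinf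
  obtain ⟨x, hx, hx0⟩ := Submodule.exists_mem_ne_zero_of_ne_bot hne
  exact ⟨x, hx, hx0⟩

end helpers

section spanstuff
variable {n : ℕ} (A : Matrix (Fin n) (Fin n) ℝ) (ν : Fin n → ℝ) (u : Fin n → Fin n → ℝ)

lemma u_linindep (hu : ∀ i k, u i ⬝ᵥ u k = if i = k then (1:ℝ) else 0) :
    LinearIndependent ℝ u := by
  rw [Fintype.linearIndependent_iff]
  intro g hg i
  have h := congrArg (fun y => u i ⬝ᵥ y) hg
  rw [dotProduct_sum'] at h
  simp_rw [dotProduct_smul, hu] at h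
  rw [Finset.sum_eq_single i (fun k _ hk => by simp [Ne.symm hk]) (by simp)] at h
  simpa using h

lemma mem_uspan_iff (hu : ∀ i k, u i ⬝ᵥ u k = if i = k then (1:ℝ) else 0)
    (hcompl : ∀ x : Fin n → ℝ, x = ∑ i, (u i ⬝ᵥ x) • u i) (T : Finset (Fin n))
    (x : Fin n → ℝ) :
    x ∈ Submodule.span ℝ (Set.range fun t : T => u ↑t) ↔ ∀ i ∉ T, u i ⬝ᵥ x = 0 := by
  constructor
  · intro hx i hiT
    induction hx using Submodule.span_induction with
    | mem y hy =>
        obtain ⟨t, rfl⟩ := hy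
        rw [hu]
        simp only [ite_eq_right_iff]
        intro he; exact absurd (he ▸ t.2) hiT
    | zero => simp
    | add y z _ _ hy hz => rw [dotProduct_add, hy, hz, add_zero]
    | smul a y _ hy => rw [dotProduct_smul, hy, smul_zero]
  · intro hx
    have hsub : ∑ i ∈ T, (u i ⬝ᵥ x) • u i = ∑ i, (u i ⬝ᵥ x) • u i :=
      Finset.sum_subset (Finset.subset_univ T)
        (fun i _ hiT => by rw [hx i hiT, zero_smul])
    have hmem : ∑ i ∈ T, (u i ⬝ᵥ x) • u i ∈
        Submodule.span ℝ (Set.range fun t : T => u ↑t) :=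
      Submodule.sum_mem _ fun i hi =>
        Submodule.smul_mem _ _ (Submodule.subset_span ⟨⟨i, hi⟩, rfl⟩)
    rw [hsub, ← hcompl x] at hmem
    exact hmem

lemma uspan_finrank (hu : ∀ i k, u i ⬝ᵥ u k = if i = k then (1:ℝ) else 0)
    (T : Finset (Fin n)) :
    Module.finrank ℝ ↥(Submodule.span ℝ (Set.range fun t : T => u ↑t)) = T.card := by
  have h := finrank_span_eq_card ((u_linindep u hu).comp
    ((↑) : T → Fin n) Subtype.val_injective)
  rw [Fintype.card_coe] at h
  exact h

lemma repr_identities (hAu : ∀ i, A *ᵥ u i = ν i • u i)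
    (hu : ∀ i k, u i ⬝ᵥ u k = if i = k then (1:ℝ) else 0)
    (r : Fin n → ℝ) (x : Fin n → ℝ) (hx : x = ∑ i, r i • u i) :
    x ⬝ᵥ x = ∑ i, (r i)^2 ∧
    x ⬝ᵥ (A *ᵥ x) = ∑ i, ν i * (r i)^2 ∧
    x ⬝ᵥ (A *ᵥ (A *ᵥ x)) = ∑ i, (ν i)^2 * (r i)^2 := by
  subst hx
  have hAx : A *ᵥ (∑ i, r i • u i) = ∑ i, (ν i * r i) • u i := by
    rw [mulVec_sum']
    refine Finset.sum_congr rfl fun i _ => ?_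
    rw [Matrix.mulVec_smul, hAu, smul_smul, mul_comm]
  have hAAx : A *ᵥ (A *ᵥ (∑ i, r i • u i)) = ∑ i, ((ν i)^2 * r i) • u i := by
    rw [hAx, mulVec_sum']
    refine Finset.sum_congr rfl fun i _ => ?_
    rw [Matrix.mulVec_smul, hAu, smul_smul]
    ring_nf
  refine ⟨?_, ?_, ?_⟩
  · rw [dot_sum_sum u hu]
    exact Finset.sum_congr rfl fun i _ => (sq _).symm
  · rw [hAx, dot_sum_sum u hu]
    exact Finset.sum_congr rfl fun i _ => by ring
  · rw [hAAx, dot_sum_sum u hu]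
    exact Finset.sum_congr rfl fun i _ => by ring

end spanstuff
end

noncomputable section
open Matrix Finset

variable {n : ℕ}

lemma nthLargest_le_of_subspace (A : Matrix (Fin n) (Fin n) ℝ) (hA : A.IsHermitian)
    (j : Fin n) (c : ℝ) (W : Submodule ℝ (Fin n → ℝ))
    (hdim : n ≤ Module.finrank ℝ W + (j : ℕ))
    (hW : ∀ x ∈ W, x ⬝ᵥ (A *ᵥ x) ≤ c * (x ⬝ᵥ x)) :
    nthLargest hA.eigenvalues j ≤ c := by
  classical
  by_contra hc
  push_neg at hc
  obtain ⟨u, hAu, hu, hcompl⟩ := eig_basis A hA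
  set μ := nthLargest hA.eigenvalues j with hμ
  set T := Finset.univ.filter (fun i => μ ≤ hA.eigenvalues i) with hT
  have hTcard : (j : ℕ) + 1 ≤ T.card := card_ge_nthLargest _ j
  set U := Submodule.span ℝ (Set.range fun t : T => u ↑t) with hUdef
  have hUdim : Module.finrank ℝ ↥U = T.card := uspan_finrank u hu T
  obtain ⟨x, hxm, hx0⟩ := exists_ne_zero_mem_inf U W (by omega)
  have hoff : ∀ i ∉ T, u i ⬝ᵥ x = 0 := (mem_uspan_iff u hu hcompl T x).1 hxm.1
  obtain ⟨h1, h2, -⟩ := repr_identities A hA.eigenvalues u hAu hu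
    (fun i => u i ⬝ᵥ x) x (hcompl x)
  have hlow : μ * (x ⬝ᵥ x) ≤ x ⬝ᵥ (A *ᵥ x) := by
    rw [h1, h2, Finset.mul_sum]
    refine Finset.sum_le_sum fun i _ => ?_
    by_cases hiT : i ∈ T
    · exact mul_le_mul_of_nonneg_right ((Finset.mem_filter.1 hiT).2) (sq_nonneg _)
    · rw [hoff i hiT]; simp
  have hpos := dot_self_pos hx0
  have hup := hW x hxm.2
  nlinarith

lemma le_nthLargest_of_subspace (A : Matrix (Fin n) (Fin n) ℝ) (hA : A.IsHermitian)
    (j : Fin n) (c : ℝ) (U : Submodule ℝ (Fin n → ℝ))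
    (hdim : (j : ℕ) + 1 ≤ Module.finrank ℝ U)
    (hU : ∀ x ∈ U, c * (x ⬝ᵥ x) ≤ x ⬝ᵥ (A *ᵥ x)) :
    c ≤ nthLargest hA.eigenvalues j := by
  classical
  by_contra hc
  push_neg at hc
  obtain ⟨u, hAu, hu, hcompl⟩ := eig_basis A hA
  set μ := nthLargest hA.eigenvalues j with hμ
  set T := Finset.univ.filter (fun i => hA.eigenvalues i ≤ μ) with hT
  have hTcard : n - (j : ℕ) ≤ T.card := card_le_nthLargest _ j
  set W := Submodule.span ℝ (Set.range fun t : T => u ↑t) with hWdef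
  have hWdim : Module.finrank ℝ ↥W = T.card := uspan_finrank u hu T
  have hjn : (j : ℕ) < n := j.2
  obtain ⟨x, hxm, hx0⟩ := exists_ne_zero_mem_inf U W (by omega)
  have hoff : ∀ i ∉ T, u i ⬝ᵥ x = 0 := (mem_uspan_iff u hu hcompl T x).1 hxm.2
  obtain ⟨h1, h2, -⟩ := repr_identities A hA.eigenvalues u hAu hu
    (fun i => u i ⬝ᵥ x) x (hcompl x)
  have hhigh : x ⬝ᵥ (A *ᵥ x) ≤ μ * (x ⬝ᵥ x) := by
    rw [h1, h2, Finset.mul_sum]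
    refine Finset.sum_le_sum fun i _ => ?_
    by_cases hiT : i ∈ T
    · exact mul_le_mul_of_nonneg_right ((Finset.mem_filter.1 hiT).2) (sq_nonneg _)
    · rw [hoff i hiT]; simp
  have hpos := dot_self_pos hx0
  have hlow := hU x hxm.1
  nlinarith

lemma nthLargest_nonneg_of_pos (A : Matrix (Fin n) (Fin n) ℝ) (hA : A.IsHermitian)
    (hpos : ∀ x : Fin n → ℝ, 0 ≤ x ⬝ᵥ (A *ᵥ x)) (j : Fin n) :
    0 ≤ nthLargest hA.eigenvalues j := by
  refine le_nthLargest_of_subspace A hA j 0 ⊤ ?_ ?_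
  · have : Module.finrank ℝ (⊤ : Submodule ℝ (Fin n → ℝ)) = n := by
      rw [finrank_top, Module.finrank_pi]
      simp
    omega
  · intro x _
    simpa using hpos x

lemma nthLargest_le_nthLargest_add (A N : Matrix (Fin n) (Fin n) ℝ)
    (hA : A.IsHermitian) (hN : N.IsHermitian) (c : ℝ)
    (hAN : ∀ x : Fin n → ℝ, x ⬝ᵥ (A *ᵥ x) ≤ x ⬝ᵥ (N *ᵥ x) + c * (x ⬝ᵥ x)) (j : Fin n) :
    nthLargest hA.eigenvalues j ≤ nthLargest hN.eigenvalues j + c := by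
  classical
  obtain ⟨u, hNu, hu, hcompl⟩ := eig_basis N hN
  set μ := nthLargest hN.eigenvalues j with hμ
  set T := Finset.univ.filter (fun i => hN.eigenvalues i ≤ μ) with hT
  have hTcard : n - (j : ℕ) ≤ T.card := card_le_nthLargest _ j
  set W := Submodule.span ℝ (Set.range fun t : T => u ↑t) with hWdef
  have hWdim : Module.finrank ℝ ↥W = T.card := uspan_finrank u hu T
  have hjn : (j : ℕ) < n := j.2
  refine nthLargest_le_of_subspace A hA j (μ + c) W (by omega) ?_
  intro x hx
  have hoff : ∀ i ∉ T, u i ⬝ᵥ x = 0 := (mem_uspan_iff u hu hcompl T x).1 hx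
  obtain ⟨h1, h2, -⟩ := repr_identities N hN.eigenvalues u hNu hu
    (fun i => u i ⬝ᵥ x) x (hcompl x)
  have hhigh : x ⬝ᵥ (N *ᵥ x) ≤ μ * (x ⬝ᵥ x) := by
    rw [h1, h2, Finset.mul_sum]
    refine Finset.sum_le_sum fun i _ => ?_
    by_cases hiT : i ∈ T
    · exact mul_le_mul_of_nonneg_right ((Finset.mem_filter.1 hiT).2) (sq_nonneg _)
    · rw [hoff i hiT]; simp
  have := hAN x
  nlinarith [dot_self_nonneg x]

lemma nthLargest_smul (A : Matrix (Fin n) (Fin n) ℝ) (hA : A.IsHermitian)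
    (c : ℝ) (hc : 0 ≤ c) (hcA : (c • A).IsHermitian) (j : Fin n) :
    nthLargest hcA.eigenvalues j = c * nthLargest hA.eigenvalues j := by
  classical
  obtain ⟨u, hAu, hu, hcompl⟩ := eig_basis A hA
  set μ := nthLargest hA.eigenvalues j with hμ
  have hjn : (j : ℕ) < n := j.2
  have hsmul : ∀ x : Fin n → ℝ, x ⬝ᵥ ((c • A) *ᵥ x) = c * (x ⬝ᵥ (A *ᵥ x)) := by
    intro x
    rw [Matrix.smul_mulVec, dotProduct_smul]
    rfl
  apply le_antisymm
  · set T := Finset.univ.filter (fun i => hA.eigenvalues i ≤ μ) with hT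
    have hTcard : n - (j : ℕ) ≤ T.card := card_le_nthLargest _ j
    set W := Submodule.span ℝ (Set.range fun t : T => u ↑t) with hWdef
    have hWdim : Module.finrank ℝ ↥W = T.card := uspan_finrank u hu T
    refine nthLargest_le_of_subspace _ hcA j (c * μ) W (by omega) ?_
    intro x hx
    have hoff : ∀ i ∉ T, u i ⬝ᵥ x = 0 := (mem_uspan_iff u hu hcompl T x).1 hx
    obtain ⟨h1, h2, -⟩ := repr_identities A hA.eigenvalues u hAu hu
      (fun i => u i ⬝ᵥ x) x (hcompl x)
    have hhigh : x ⬝ᵥ (A *ᵥ x) ≤ μ * (x ⬝ᵥ x) := by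
      rw [h1, h2, Finset.mul_sum]
      refine Finset.sum_le_sum fun i _ => ?_
      by_cases hiT : i ∈ T
      · exact mul_le_mul_of_nonneg_right ((Finset.mem_filter.1 hiT).2) (sq_nonneg _)
      · rw [hoff i hiT]; simp
    rw [hsmul]
    calc c * (x ⬝ᵥ (A *ᵥ x)) ≤ c * (μ * (x ⬝ᵥ x)) := mul_le_mul_of_nonneg_left hhigh hc
      _ = c * μ * (x ⬝ᵥ x) := by ring
  · set T := Finset.univ.filter (fun i => μ ≤ hA.eigenvalues i) with hT
    have hTcard : (j : ℕ) + 1 ≤ T.card := card_ge_nthLargest _ j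
    set U := Submodule.span ℝ (Set.range fun t : T => u ↑t) with hUdef
    have hUdim : Module.finrank ℝ ↥U = T.card := uspan_finrank u hu T
    refine le_nthLargest_of_subspace _ hcA j (c * μ) U (by omega) ?_
    intro x hx
    have hoff : ∀ i ∉ T, u i ⬝ᵥ x = 0 := (mem_uspan_iff u hu hcompl T x).1 hx
    obtain ⟨h1, h2, -⟩ := repr_identities A hA.eigenvalues u hAu hu
      (fun i => u i ⬝ᵥ x) x (hcompl x)
    have hlow : μ * (x ⬝ᵥ x) ≤ x ⬝ᵥ (A *ᵥ x) := by
      rw [h1, h2, Finset.mul_sum]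
      refine Finset.sum_le_sum fun i _ => ?_
      by_cases hiT : i ∈ T
      · exact mul_le_mul_of_nonneg_right ((Finset.mem_filter.1 hiT).2) (sq_nonneg _)
      · rw [hoff i hiT]; simp
    rw [hsmul]
    calc c * μ * (x ⬝ᵥ x) = c * (μ * (x ⬝ᵥ x)) := by ring
      _ ≤ c * (x ⬝ᵥ (A *ᵥ x)) := mul_le_mul_of_nonneg_left hlow hc

lemma quadform_le_entry_sum (D : Matrix (Fin n) (Fin n) ℝ) (x : Fin n → ℝ) :
    x ⬝ᵥ (D *ᵥ x) ≤ (∑ j, ∑ k, |D j k|) * (x ⬝ᵥ x) := by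
  have hsq : ∀ j : Fin n, (x j)^2 ≤ x ⬝ᵥ x := by
    intro j
    have h0 : (x j)^2 = ∑ i, if i = j then (x j)^2 else 0 := by simp
    rw [h0]
    refine Finset.sum_le_sum fun i _ => ?_
    by_cases h : i = j
    · subst h; simp [sq]
    · simp [h, mul_self_nonneg]
  have hbd : ∀ j k : Fin n, |x j| * |x k| ≤ x ⬝ᵥ x := by
    intro j k
    nlinarith [hsq j, hsq k, abs_nonneg (x j), abs_nonneg (x k), sq_abs (x j), sq_abs (x k),
      dot_self_nonneg x, sq_nonneg (|x j| - |x k|)]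
  have expand : x ⬝ᵥ (D *ᵥ x) = ∑ j, ∑ k, x j * D j k * x k := by
    simp only [dotProduct, mulVec, Finset.mul_sum]
    exact Finset.sum_congr rfl fun j _ => Finset.sum_congr rfl fun k _ => by ring
  rw [expand, Finset.sum_mul]
  refine Finset.sum_le_sum fun j _ => ?_
  rw [Finset.sum_mul]
  refine Finset.sum_le_sum fun k _ => ?_
  calc x j * D j k * x k ≤ |x j * D j k * x k| := le_abs_self _
    _ = |D j k| * (|x j| * |x k|) := by rw [abs_mul, abs_mul]; ring
    _ ≤ |D j k| * (x ⬝ᵥ x) := mul_le_mul_of_nonneg_left (hbd j k) (abs_nonneg _)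

end

noncomputable section
open Matrix Finset

section gram
variable {p m : ℕ} (B : Matrix (Fin p) (Fin m) ℝ)

lemma dotTrans (y : Fin m → ℝ) (x : Fin p → ℝ) :
    (B *ᵥ y) ⬝ᵥ x = y ⬝ᵥ (Bᵀ *ᵥ x) := by
  simp only [dotProduct, mulVec, dotProduct, transpose_apply, Finset.sum_mul, Finset.mul_sum]
  rw [Finset.sum_comm]
  exact Finset.sum_congr rfl fun l _ => Finset.sum_congr rfl fun i _ => by ring

lemma hermG : (B * Bᵀ).IsHermitian := by
  have h : Bᵀ = Bᴴ := (conjTranspose_eq_transpose_of_trivial B).symm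
  rw [h]
  exact isHermitian_mul_conjTranspose_self B

lemma hermM : (Bᵀ * B).IsHermitian := by
  have h : Bᵀ = Bᴴ := (conjTranspose_eq_transpose_of_trivial B).symm
  rw [h]
  exact isHermitian_conjTranspose_mul_self B

lemma qM (y w : Fin m → ℝ) : y ⬝ᵥ ((Bᵀ * B) *ᵥ w) = (B *ᵥ y) ⬝ᵥ (B *ᵥ w) := by
  rw [← Matrix.mulVec_mulVec, dotTrans]

lemma qG (x : Fin p → ℝ) : x ⬝ᵥ ((B * Bᵀ) *ᵥ x) = (Bᵀ *ᵥ x) ⬝ᵥ (Bᵀ *ᵥ x) := by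
  rw [← Matrix.mulVec_mulVec, dotProduct_comm, dotTrans]

lemma Mpos (y : Fin m → ℝ) : 0 ≤ y ⬝ᵥ ((Bᵀ * B) *ᵥ y) := by
  rw [qM]; exact dot_self_nonneg _

lemma Gpos (x : Fin p → ℝ) : 0 ≤ x ⬝ᵥ ((B * Bᵀ) *ᵥ x) := by
  rw [qG]; exact dot_self_nonneg _

variable (E : Matrix (Fin p) (Fin p) ℝ) (hE : E.IsHermitian) (Cb : ℝ)
  (hEpos : ∀ x : Fin p → ℝ, 0 ≤ x ⬝ᵥ (E *ᵥ x))
  (hEbdd : ∀ x : Fin p → ℝ, x ⬝ᵥ (E *ᵥ x) ≤ Cb * (x ⬝ᵥ x))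

lemma qGE (x : Fin p → ℝ) :
    x ⬝ᵥ ((B * Bᵀ + E) *ᵥ x) = x ⬝ᵥ ((B * Bᵀ) *ᵥ x) + x ⬝ᵥ (E *ᵥ x) := by
  rw [Matrix.add_mulVec, dotProduct_add]

include hE hEpos hEbdd in
lemma gram_tail (k : Fin p) (hk : m ≤ (k : ℕ)) :
    nthLargest ((hermG B).add hE).eigenvalues k ≤ Cb := by
  classical
  have hrank := LinearMap.finrank_range_add_finrank_ker (Matrix.mulVecLin Bᵀ)
  have hdomain : Module.finrank ℝ (Fin p → ℝ) = p := by
    rw [Module.finrank_pi]; simp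
  rw [hdomain] at hrank
  have hrange : Module.finrank ℝ ↥(LinearMap.range (Matrix.mulVecLin Bᵀ)) ≤ m := by
    have := Submodule.finrank_le (LinearMap.range (Matrix.mulVecLin Bᵀ))
    rwa [Module.finrank_pi, Fintype.card_fin] at this
  set W := LinearMap.ker (Matrix.mulVecLin Bᵀ) with hW
  refine nthLargest_le_of_subspace _ _ k Cb W ?_ ?_
  · show p ≤ _ + (k : ℕ)
    omega
  intro x hx
  have hx0 : Bᵀ *ᵥ x = 0 := by
    have := LinearMap.mem_ker.1 hx
    rwa [Matrix.mulVecLin_apply] at this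
  rw [qGE B E x, qG B, hx0]
  simpa using hEbdd x

include hE hEpos hEbdd in
lemma gram_upper (j : Fin m) (hjp : (j : ℕ) < p) :
    nthLargest ((hermG B).add hE).eigenvalues ⟨j, hjp⟩
      ≤ nthLargest (hermM B).eigenvalues j + Cb := by
  classical
  set M := Bᵀ * B with hMdef
  set μ := nthLargest (hermM B).eigenvalues j with hμ
  have hμ0 : 0 ≤ μ := nthLargest_nonneg_of_pos M (hermM B) (Mpos B) j
  obtain ⟨u, hMu, hu, hcompl⟩ := eig_basis M (hermM B)
  set T := Finset.univ.filter (fun i => (hermM B).eigenvalues i ≤ μ) with hT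
  have hTcard : m - (j : ℕ) ≤ T.card := card_le_nthLargest _ j
  set C : Matrix (↑(Tᶜ : Finset (Fin m)) : Type) (Fin m) ℝ :=
    Matrix.of (fun t l => u (↑t) l) with hC
  have hrank := LinearMap.finrank_range_add_finrank_ker (Matrix.mulVecLin (C * Bᵀ))
  have hdomain : Module.finrank ℝ (Fin p → ℝ) = p := by
    rw [Module.finrank_pi]; simp
  rw [hdomain] at hrank
  have hrange : Module.finrank ℝ ↥(LinearMap.range (Matrix.mulVecLin (C * Bᵀ)))
      ≤ (Tᶜ : Finset (Fin m)).card := by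
    have h1 := Submodule.finrank_le (LinearMap.range (Matrix.mulVecLin (C * Bᵀ)))
    rwa [Module.finrank_pi, Fintype.card_coe] at h1
  have hTc : (Tᶜ : Finset (Fin m)).card = m - T.card := by
    rw [Finset.card_compl]; simp
  have hjm : (j : ℕ) < m := j.2
  set W := LinearMap.ker (Matrix.mulVecLin (C * Bᵀ)) with hW
  refine nthLargest_le_of_subspace _ _ ⟨j, hjp⟩ (μ + Cb) W ?_ ?_
  · show p ≤ _ + ((j : ℕ))
    omega
  intro x hx
  set y := Bᵀ *ᵥ x with hy
  have hoff : ∀ i ∉ T, u i ⬝ᵥ y = 0 := by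
    intro i hiT
    have hmem : i ∈ (Tᶜ : Finset (Fin m)) := Finset.mem_compl.2 hiT
    have h0 : (C * Bᵀ) *ᵥ x = 0 := by
      have := LinearMap.mem_ker.1 hx
      rwa [Matrix.mulVecLin_apply] at this
    have := congrFun h0 ⟨i, hmem⟩
    rw [← Matrix.mulVec_mulVec] at this
    simpa [Matrix.mulVec, hC, dotProduct, hy] using this
  obtain ⟨hy1, hy2, -⟩ := repr_identities M (hermM B).eigenvalues u hMu hu
    (fun i => u i ⬝ᵥ y) y (hcompl y)
  have hyM : y ⬝ᵥ (M *ᵥ y) ≤ μ * (y ⬝ᵥ y) := by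
    rw [hy1, hy2, Finset.mul_sum]
    refine Finset.sum_le_sum fun i _ => ?_
    by_cases hiT : i ∈ T
    · exact mul_le_mul_of_nonneg_right ((Finset.mem_filter.1 hiT).2) (sq_nonneg _)
    · rw [hoff i hiT]; simp
  -- Cauchy-Schwarz : (y ⬝ᵥ y)^2 = ((B *ᵥ y) ⬝ᵥ x)^2 ≤ (y ⬝ᵥ M y)(x ⬝ᵥ x)
  have hcs : ((B *ᵥ y) ⬝ᵥ x)^2 ≤ ((B *ᵥ y) ⬝ᵥ (B *ᵥ y)) * (x ⬝ᵥ x) := by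
    have h := Finset.sum_mul_sq_le_sq_mul_sq Finset.univ (fun i => (B *ᵥ y) i) x
    simpa [dotProduct, sq] using h
  have hyy : y ⬝ᵥ y = (B *ᵥ y) ⬝ᵥ x := (dotTrans B y x).symm
  have hBy : (B *ᵥ y) ⬝ᵥ (B *ᵥ y) = y ⬝ᵥ (M *ᵥ y) := (qM B y y).symm
  have hkey : y ⬝ᵥ y ≤ μ * (x ⬝ᵥ x) := by
    rcases eq_or_lt_of_le (dot_self_nonneg y) with h0 | h0
    · rw [← h0]
      exact mul_nonneg hμ0 (dot_self_nonneg x)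
    · nlinarith [dot_self_nonneg x]
  rw [qGE B E x, qG B, ← hy]
  have := hEbdd x
  nlinarith

include hE hEpos in
lemma gram_lower (j : Fin m) (hjp : (j : ℕ) < p) :
    nthLargest (hermM B).eigenvalues j
      ≤ nthLargest ((hermG B).add hE).eigenvalues ⟨j, hjp⟩ := by
  classical
  set M := Bᵀ * B with hMdef
  set μ := nthLargest (hermM B).eigenvalues j with hμ
  have hμ0 : 0 ≤ μ := nthLargest_nonneg_of_pos M (hermM B) (Mpos B) j
  rcases eq_or_lt_of_le hμ0 with h0 | h0
  · rw [← h0]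
    refine nthLargest_nonneg_of_pos _ _ ?_ _
    intro x
    rw [qGE B E x]
    exact add_nonneg (Gpos B x) (hEpos x)
  obtain ⟨u, hMu, hu, hcompl⟩ := eig_basis M (hermM B)
  set T := Finset.univ.filter (fun i => μ ≤ (hermM B).eigenvalues i) with hT
  have hTcard : (j : ℕ) + 1 ≤ T.card := card_ge_nthLargest _ j
  set V := Submodule.span ℝ (Set.range fun t : T => u ↑t) with hVdef
  have hVdim : Module.finrank ℝ ↥V = T.card := uspan_finrank u hu T
  -- quadratic form estimates on V
  have hVlow : ∀ y ∈ V, μ * (y ⬝ᵥ y) ≤ y ⬝ᵥ (M *ᵥ y) ∧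
      μ * (y ⬝ᵥ (M *ᵥ y)) ≤ y ⬝ᵥ (M *ᵥ (M *ᵥ y)) := by
    intro y hy
    have hoff : ∀ i ∉ T, u i ⬝ᵥ y = 0 := (mem_uspan_iff u hu hcompl T y).1 hy
    obtain ⟨hy1, hy2, hy3⟩ := repr_identities M (hermM B).eigenvalues u hMu hu
      (fun i => u i ⬝ᵥ y) y (hcompl y)
    constructor
    · rw [hy1, hy2, Finset.mul_sum]
      refine Finset.sum_le_sum fun i _ => ?_
      by_cases hiT : i ∈ T
      · exact mul_le_mul_of_nonneg_right ((Finset.mem_filter.1 hiT).2) (sq_nonneg _)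
      · rw [hoff i hiT]; simp
    · rw [hy2, hy3, Finset.mul_sum]
      refine Finset.sum_le_sum fun i _ => ?_
      by_cases hiT : i ∈ T
      · have hge : μ ≤ (hermM B).eigenvalues i := (Finset.mem_filter.1 hiT).2
        have : μ * (hermM B).eigenvalues i ≤ ((hermM B).eigenvalues i)^2 := by nlinarith
        calc μ * ((hermM B).eigenvalues i * (u i ⬝ᵥ y)^2)
            = (μ * (hermM B).eigenvalues i) * (u i ⬝ᵥ y)^2 := by ring
          _ ≤ ((hermM B).eigenvalues i)^2 * (u i ⬝ᵥ y)^2 :=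
              mul_le_mul_of_nonneg_right this (sq_nonneg _)
      · rw [hoff i hiT]; simp
  -- the image subspace
  set f := (Matrix.mulVecLin B).domRestrict V with hf
  have hker : LinearMap.ker f = ⊥ := by
    rw [LinearMap.ker_eq_bot']
    intro ⟨y, hyV⟩ hfy
    have hBy : B *ᵥ y = 0 := by
      simpa [hf, LinearMap.domRestrict_apply, Matrix.mulVecLin_apply] using hfy
    have h1 : y ⬝ᵥ (M *ᵥ y) = 0 := by
      rw [qM B y y] at *
      rw [hBy]
      simp
    have h2 := (hVlow y hyV).1
    rw [h1] at h2
    have : y = 0 := by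
      by_contra hy0
      have := dot_self_pos hy0
      nlinarith
    exact Subtype.ext this
  have hrankf := LinearMap.finrank_range_add_finrank_ker f
  rw [hker] at hrankf
  have hUdim : Module.finrank ℝ ↥(Submodule.map (Matrix.mulVecLin B) V) = T.card := by
    have h1 : LinearMap.range f = Submodule.map (Matrix.mulVecLin B) V :=
      LinearMap.range_domRestrict V (Matrix.mulVecLin B)
    rw [h1] at hrankf
    simp only [finrank_bot, add_zero] at hrankf
    rw [hrankf]
    exact hVdim
  refine le_nthLargest_of_subspace _ _ ⟨j, hjp⟩ μ
    (Submodule.map (Matrix.mulVecLin B) V) ?_ ?_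
  · show (j : ℕ) + 1 ≤ _
    omega
  · intro x hx
    obtain ⟨y, hyV, rfl⟩ := Submodule.mem_map.1 hx
    rw [Matrix.mulVecLin_apply]
    have hGx : (B *ᵥ y) ⬝ᵥ ((B * Bᵀ + E) *ᵥ (B *ᵥ y))
        = y ⬝ᵥ (M *ᵥ (M *ᵥ y)) + (B *ᵥ y) ⬝ᵥ (E *ᵥ (B *ᵥ y)) := by
      rw [qGE B E]
      congr 1
      have hstep : (B * Bᵀ) *ᵥ (B *ᵥ y) = B *ᵥ (M *ᵥ y) := by
        rw [hMdef, Matrix.mulVec_mulVec, Matrix.mulVec_mulVec, Matrix.mul_assoc]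
      rw [hstep]
      exact (qM B y (M *ᵥ y)).symm
    have hxx : (B *ᵥ y) ⬝ᵥ (B *ᵥ y) = y ⬝ᵥ (M *ᵥ y) := (qM B y y).symm
    have h1 := (hVlow y hyV).2
    have h2 := hEpos (B *ᵥ y)
    rw [hGx, hxx]
    linarith

end gram
end

noncomputable section
open Matrix Finset Filter

lemma smul_isHermitian {n : ℕ} {A : Matrix (Fin n) (Fin n) ℝ} (hA : A.IsHermitian)
    (c : ℝ) : (c • A).IsHermitian := by
  unfold Matrix.IsHermitian at *
  rw [Matrix.conjTranspose_smul, hA]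
  congr 1

lemma quad_sub (A N : Matrix (Fin n) (Fin n) ℝ) (x : Fin n → ℝ) :
    x ⬝ᵥ ((A - N) *ᵥ x) = x ⬝ᵥ (A *ᵥ x) - x ⬝ᵥ (N *ᵥ x) := by
  rw [Matrix.sub_mulVec, dotProduct_sub]

lemma det_part {m : ℕ} (Sb : Matrix (Fin m) (Fin m) ℝ) (hSb : Sb.IsHermitian)
    (v : ℕ → Fin m → ℝ)
    (hconv : ∀ j k : Fin m, Tendsto
      (fun p : ℕ => (∑ i ∈ Finset.range p, v i j * v i k) / p) atTop (nhds (Sb j k)))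
    (j : Fin m) :
    Tendsto (fun p : ℕ =>
        nthLargest (hermM (Matrix.of fun (i : Fin p) l => v (i : ℕ) l)).eigenvalues j / p)
      atTop (nhds (nthLargest hSb.eigenvalues j)) := by
  classical
  set Bp : (p : ℕ) → Matrix (Fin p) (Fin m) ℝ :=
    fun p => Matrix.of fun i l => v (i : ℕ) l with hBp
  set Mp : (p : ℕ) → Matrix (Fin m) (Fin m) ℝ := fun p => (Bp p)ᵀ * (Bp p) with hMp
  set Dp : (p : ℕ) → Matrix (Fin m) (Fin m) ℝ :=
    fun p => ((p : ℝ))⁻¹ • Mp p - Sb with hDp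
  set eps : ℕ → ℝ := fun p => ∑ a, ∑ c, |Dp p a c| with heps
  -- entrywise convergence
  have hentry : ∀ a c : Fin m, Tendsto (fun p : ℕ => Dp p a c) atTop (nhds 0) := by
    intro a c
    have hMval : ∀ p : ℕ, Mp p a c = ∑ i ∈ Finset.range p, v i a * v i c := by
      intro p
      rw [hMp]
      simp only [Matrix.mul_apply, Matrix.transpose_apply, Matrix.of_apply]
      exact Fin.sum_univ_eq_sum_range (fun i => v i a * v i c) p
    have : Tendsto (fun p : ℕ => (∑ i ∈ Finset.range p, v i a * v i c) / p - Sb a c)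
        atTop (nhds (Sb a c - Sb a c)) := (hconv a c).sub tendsto_const_nhds
    rw [sub_self] at this
    refine this.congr fun p => ?_
    rw [hDp]
    simp only [Matrix.sub_apply, Matrix.smul_apply, hMval p, smul_eq_mul]
    rw [div_eq_inv_mul]
  have heps0 : Tendsto eps atTop (nhds 0) := by
    have : Tendsto (fun p : ℕ => ∑ a : Fin m, ∑ c : Fin m, |Dp p a c|) atTop
        (nhds (∑ a : Fin m, ∑ c : Fin m, (0:ℝ))) := by
      refine tendsto_finset_sum _ fun a _ => tendsto_finset_sum _ fun c _ => ?_
      have := (hentry a c).abs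
      simpa using this
    simpa using this
  -- Lipschitz bound
  have hlip : ∀ p : ℕ, 0 < p →
      |nthLargest (hermM (Bp p)).eigenvalues j / p - nthLargest hSb.eigenvalues j|
        ≤ eps p := by
    intro p hp
    have hpinv : (0:ℝ) ≤ ((p:ℝ))⁻¹ := by positivity
    have hscale := nthLargest_smul (Mp p) (hermM (Bp p)) ((p:ℝ))⁻¹ hpinv
      (smul_isHermitian (hermM (Bp p)) _) j
    have hdiv : nthLargest (hermM (Bp p)).eigenvalues j / p
        = nthLargest (smul_isHermitian (hermM (Bp p)) ((p:ℝ))⁻¹).eigenvalues j := by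
      rw [hscale, div_eq_inv_mul]
    rw [hdiv, abs_le]
    constructor
    · have h := nthLargest_le_nthLargest_add Sb (((p:ℝ))⁻¹ • Mp p) hSb
        (smul_isHermitian (hermM (Bp p)) ((p:ℝ))⁻¹) (eps p) ?_ j
      · linarith
      · intro x
        have hq := quadform_le_entry_sum (Sb - ((p:ℝ))⁻¹ • Mp p) x
        have habs : (∑ a, ∑ c, |(Sb - ((p:ℝ))⁻¹ • Mp p) a c|) = eps p := by
          rw [heps]
          refine Finset.sum_congr rfl fun a _ => Finset.sum_congr rfl fun c _ => ?_
          have hDval : Dp p a c = (((p:ℝ))⁻¹ • Mp p - Sb) a c := rfl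
          rw [hDval]
          simp only [Matrix.sub_apply]
          rw [abs_sub_comm]
        rw [habs, quad_sub] at hq
        linarith
    · have h := nthLargest_le_nthLargest_add (((p:ℝ))⁻¹ • Mp p) Sb
        (smul_isHermitian (hermM (Bp p)) ((p:ℝ))⁻¹) hSb (eps p) ?_ j
      · linarith
      · intro x
        have hq := quadform_le_entry_sum (((p:ℝ))⁻¹ • Mp p - Sb) x
        rw [quad_sub] at hq
        have hDval : ((p:ℝ))⁻¹ • Mp p - Sb = Dp p := rfl
        rw [hDval] at hq
        have : (∑ a, ∑ c, |Dp p a c|) = eps p := rfl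
        rw [this] at hq
        linarith
  -- squeeze
  rw [← tendsto_sub_nhds_zero_iff]
  refine squeeze_zero_norm' ?_ heps0
  filter_upwards [eventually_gt_atTop 0] with p hp
  simpa [Real.norm_eq_abs] using hlip p hp

end

noncomputable section
open MeasureTheory ProbabilityTheory Filter Matrix

lemma eigDesc_eq {d : ℕ} (X : Matrix (Fin d) (Fin d) ℝ) (hX : X.IsHermitian) (j : Fin d) :
    eigDesc X j = nthLargest hX.eigenvalues j := by
  unfold eigDesc
  rw [dif_pos hX]

lemma quad_scale {p : ℕ} (E : Matrix (Fin p) (Fin p) ℝ) (Cb : ℝ)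
    (h : ∀ x : Fin p → ℝ, ∑ i, (x i) ^ 2 = 1 → x ⬝ᵥ (E *ᵥ x) ≤ Cb) :
    ∀ x : Fin p → ℝ, x ⬝ᵥ (E *ᵥ x) ≤ Cb * (x ⬝ᵥ x) := by
  intro x
  by_cases hx : x = 0
  · subst hx
    simp
  · have ht : 0 < x ⬝ᵥ x := dot_self_pos hx
    set s := Real.sqrt (x ⬝ᵥ x) with hs
    have hs0 : 0 < s := Real.sqrt_pos.2 ht
    have hs2 : s ^ 2 = x ⬝ᵥ x := Real.sq_sqrt ht.le
    set u : Fin p → ℝ := s⁻¹ • x with hu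
    have hunit : ∑ i, (u i) ^ 2 = 1 := by
      have : ∑ i, (u i)^2 = s⁻¹^2 * ∑ i, (x i)^2 := by
        rw [Finset.mul_sum]
        refine Finset.sum_congr rfl fun i _ => ?_
        rw [hu]
        simp [Pi.smul_apply, smul_eq_mul]
        ring
      rw [this]
      have hxx : ∑ i, (x i)^2 = x ⬝ᵥ x := by
        simp [dotProduct, sq]
      rw [hxx, ← hs2]
      field_simp
    have hb := h u hunit
    have hxu : x = s • u := by
      rw [hu, smul_smul, mul_inv_cancel₀ hs0.ne', one_smul]
    have hquad : x ⬝ᵥ (E *ᵥ x) = s^2 * (u ⬝ᵥ (E *ᵥ u)) := by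
      conv_lhs => rw [hxu]
      rw [Matrix.mulVec_smul, smul_dotProduct, dotProduct_smul]
      simp [smul_eq_mul, sq]
      ring
    rw [hquad, ← hs2]
    nlinarith [sq_nonneg s]


/-- **Eigenvalue growth in pervasive factor models** (Fan–Wang, eq. (2.1)). If the rows
`bᵢ'` of the `p × m` loading matrix `B` are an i.i.d. sample with mean zero and
covariance `Σ_b`, and `‖Σ_ε‖` is uniformly bounded, then almost surely, as `p → ∞`,
the `j`-th largest eigenvalue of `Σ = BB' + Σ_ε` satisfies
`λⱼ(Σ) = p λⱼ(Σ_b)(1 + o(1))` for `j ≤ m` (equivalently `λⱼ(Σ)/p → λⱼ(Σ_b)`), while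
the remaining eigenvalues stay bounded. -/
theorem factor_model_spiked_eigenvalue_growth
    {Ω : Type} [MeasurableSpace Ω] (P : Measure Ω) [IsProbabilityMeasure P]
    {m : ℕ} (hm : 0 < m)
    (Sb : Matrix (Fin m) (Fin m) ℝ) (hSb : Sb.IsHermitian)
    (hSbpos : ∀ x : Fin m → ℝ, 0 ≤ x ⬝ᵥ Sb.mulVec x)
    (b : ℕ → Ω → Fin m → ℝ)
    (hbmeas : ∀ i, Measurable (b i))
    (hbindep : iIndepFun b P)
    (hbident : ∀ i : ℕ, Measure.map (b i) P = Measure.map (b 0) P)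
    (hbmean : ∀ i j, ∫ ω, b i ω j ∂P = 0)
    (hbint : ∀ i j k, Integrable (fun ω => b i ω j * b i ω k) P)
    (hbcov : ∀ i (j k : Fin m), ∫ ω, b i ω j * b i ω k ∂P = Sb j k)
    (Sige : (p : ℕ) → Matrix (Fin p) (Fin p) ℝ)
    (hSige_symm : ∀ p, (Sige p).IsHermitian)
    (hSige_pos : ∀ p (x : Fin p → ℝ), 0 ≤ x ⬝ᵥ (Sige p).mulVec x)
    (Cb : ℝ)
    (hSige_bdd : ∀ p (x : Fin p → ℝ), ∑ i, (x i) ^ 2 = 1 →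
      x ⬝ᵥ (Sige p).mulVec x ≤ Cb) :
    ∀ᵐ ω ∂P,
      (∀ j : Fin m,
        Tendsto (fun p : ℕ =>
            (if h : (j : ℕ) < p then
              eigDesc
                ((Matrix.of fun i k : Fin p => ∑ l, b i ω l * b k ω l) + Sige p)
                ⟨j, h⟩
            else 0) / (p : ℝ))
          atTop (nhds (eigDesc Sb j))) ∧
      ∃ C' : ℝ, ∀ᶠ p : ℕ in atTop, ∀ k : Fin p, m ≤ (k : ℕ) →
        eigDesc ((Matrix.of fun i k : Fin p => ∑ l, b i ω l * b k ω l) + Sige p) k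
          ≤ C' := by
  classical
  -- strong law of large numbers for each pair of coordinates
  have hSLLN : ∀ j k : Fin m, ∀ᵐ ω ∂P, Tendsto
      (fun p : ℕ => (∑ i ∈ Finset.range p, b i ω j * b i ω k) / p)
      atTop (nhds (Sb j k)) := by
    intro j k
    have hgmeas : Measurable fun y : Fin m → ℝ => y j * y k :=
      (measurable_pi_apply j).mul (measurable_pi_apply k)
    have hint : Integrable (fun ω => b 0 ω j * b 0 ω k) P := hbint 0 j k
    have hindep : Pairwise (Function.onFun (IndepFun · · P) fun i ω => b i ω j * b i ω k) := by
      intro i i' hii'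
      exact (hbindep.indepFun hii').comp hgmeas hgmeas
    have hident : ∀ i, IdentDistrib (fun ω => b i ω j * b i ω k)
        (fun ω => b 0 ω j * b 0 ω k) P P := by
      intro i
      refine ⟨(hgmeas.comp (hbmeas i)).aemeasurable,
        (hgmeas.comp (hbmeas 0)).aemeasurable, ?_⟩
      show Measure.map ((fun y : Fin m → ℝ => y j * y k) ∘ b i) P
        = Measure.map ((fun y : Fin m → ℝ => y j * y k) ∘ b 0) P
      rw [← Measure.map_map hgmeas (hbmeas i), ← Measure.map_map hgmeas (hbmeas 0),
        hbident i]
    have h := strong_law_ae_real (fun i ω => b i ω j * b i ω k) hint hindep hident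
    have hInt : (∫ ω, b 0 ω j * b 0 ω k ∂P) = Sb j k := hbcov 0 j k
    rw [hInt] at h
    exact h
  have hae : ∀ᵐ ω ∂P, ∀ j k : Fin m, Tendsto
      (fun p : ℕ => (∑ i ∈ Finset.range p, b i ω j * b i ω k) / p)
      atTop (nhds (Sb j k)) :=
    ae_all_iff.2 fun j => ae_all_iff.2 fun k => hSLLN j k
  filter_upwards [hae] with ω hω
  -- notation
  have hEbdd : ∀ p (x : Fin p → ℝ), x ⬝ᵥ ((Sige p) *ᵥ x) ≤ Cb * (x ⬝ᵥ x) :=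
    fun p => quad_scale (Sige p) Cb (hSige_bdd p)
  have hmat : ∀ p : ℕ, (Matrix.of fun i k : Fin p => ∑ l, b i ω l * b k ω l)
      = (Matrix.of fun (i : Fin p) l => b i ω l) *
        (Matrix.of fun (i : Fin p) l => b i ω l)ᵀ := by
    intro p
    ext i k
    simp [Matrix.mul_apply]
  constructor
  · intro j
    have hdet := det_part Sb hSb (fun i => b i ω) (fun a c => hω a c) j
    rw [eigDesc_eq Sb hSb j]
    have hup : Tendsto (fun p : ℕ =>
        nthLargest (hermM (Matrix.of fun (i : Fin p) l => b (i:ℕ) ω l)).eigenvalues j / p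
          + Cb / p) atTop (nhds (nthLargest hSb.eigenvalues j + 0)) :=
      hdet.add (tendsto_const_div_atTop_nhds_zero_nat Cb)
    rw [add_zero] at hup
    refine tendsto_of_tendsto_of_tendsto_of_le_of_le' hdet hup ?_ ?_
    · filter_upwards [eventually_ge_atTop m] with p hp
      have hjp : (j : ℕ) < p := lt_of_lt_of_le j.2 hp
      rw [dif_pos hjp]
      have hGE : ((Matrix.of fun (i : Fin p) l => b (i:ℕ) ω l) *
          (Matrix.of fun (i : Fin p) l => b (i:ℕ) ω l)ᵀ + Sige p).IsHermitian :=
        (hermG _).add (hSige_symm p)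
      have hval : eigDesc ((Matrix.of fun i k : Fin p => ∑ l, b i ω l * b k ω l) + Sige p)
          ⟨j, hjp⟩ = nthLargest hGE.eigenvalues ⟨j, hjp⟩ := by
        rw [hmat p]
        exact eigDesc_eq _ hGE _
      rw [hval]
      have hlow := gram_lower (Matrix.of fun (i : Fin p) l => b (i:ℕ) ω l)
        (Sige p) (hSige_symm p) (hSige_pos p) j hjp
      have hppos : (0:ℝ) < p := by
        have : 0 < p := lt_of_lt_of_le hm hp
        exact_mod_cast this
      exact div_le_div_of_nonneg_right hlow hppos.le
    · filter_upwards [eventually_ge_atTop m] with p hp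
      have hjp : (j : ℕ) < p := lt_of_lt_of_le j.2 hp
      rw [dif_pos hjp]
      have hGE : ((Matrix.of fun (i : Fin p) l => b (i:ℕ) ω l) *
          (Matrix.of fun (i : Fin p) l => b (i:ℕ) ω l)ᵀ + Sige p).IsHermitian :=
        (hermG _).add (hSige_symm p)
      have hval : eigDesc ((Matrix.of fun i k : Fin p => ∑ l, b i ω l * b k ω l) + Sige p)
          ⟨j, hjp⟩ = nthLargest hGE.eigenvalues ⟨j, hjp⟩ := by
        rw [hmat p]
        exact eigDesc_eq _ hGE _
      rw [hval]
      have hupb := gram_upper (Matrix.of fun (i : Fin p) l => b (i:ℕ) ω l)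
        (Sige p) (hSige_symm p) Cb (hSige_pos p) (hEbdd p) j hjp
      have hppos : (0:ℝ) < p := by
        have : 0 < p := lt_of_lt_of_le hm hp
        exact_mod_cast this
      have := div_le_div_of_nonneg_right hupb hppos.le
      rwa [add_div] at this
  · refine ⟨Cb, Filter.Eventually.of_forall fun p => fun k hk => ?_⟩
    have hGE : ((Matrix.of fun (i : Fin p) l => b (i:ℕ) ω l) *
        (Matrix.of fun (i : Fin p) l => b (i:ℕ) ω l)ᵀ + Sige p).IsHermitian :=
      (hermG _).add (hSige_symm p)
    have hval : eigDesc ((Matrix.of fun i k : Fin p => ∑ l, b i ω l * b k ω l) + Sige p) k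
        = nthLargest hGE.eigenvalues k := by
      rw [hmat p]
      exact eigDesc_eq _ hGE _
    rw [hval]
    exact gram_tail (Matrix.of fun (i : Fin p) l => b (i:ℕ) ω l)
      (Sige p) (hSige_symm p) Cb (hSige_pos p) (hEbdd p) k hk

end
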